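/- A deterministic simulation of havoc via bit-consumption is surjective: for every integer x there exists a natural number seed such that decoding seed by the procedure 'sign := −(seed mod 2); seed := seed div 2; while seed mod 2 = 1 do (seed := seed div 2; x := 2·x + (seed mod 2); seed := seed div 2); seed := seed div 2' yields x (for an appropriate binary encoding of x into seed). -/

import Mathlib

/-- The bit-consuming loop of the deterministic havoc decoder: while the
next (continuation) bit is 1, consume it together with a data bit, appending
the data bit at the least-significant end of `x`; a 0 continuation bit stops
(and is consumed). -/
def havocLoop (seed : ℕ) (x : ℤ) : ℤ × ℕ :=
  if h : seed % 2 = 1 then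
    havocLoop (seed / 4) (2 * x + ((seed / 2) % 2 : ℕ))
  else
    (x, seed / 2)
termination_by seed
decreasing_by
  exact Nat.div_lt_self (Nat.pos_of_ne_zero (by omega)) (by norm_num)

/-- Deterministic havoc decoding: `x := -(seed % 2); seed := seed / 2;` then
the bit-consuming loop, returning the decoded integer and remaining seed. -/
def havoc (seed : ℕ) : ℤ × ℕ :=
  havocLoop (seed / 2) (-(seed % 2 : ℤ))

/-- The deterministic simulation of havoc via bit-consumption is surjective:
every integer is decoded from some seed. -/
lemma havocLoop_key : ∀ k : ℕ, ∀ a : ℤ, ∀ n : ℕ, n < 2^k →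
    ∃ s : ℕ, (havocLoop s a).1 = a * 2^k + n := by
  intro k
  induction k with
  | zero =>
    intro a n hn
    interval_cases n
    exact ⟨0, by rw [havocLoop]; simp⟩
  | succ k ih =>
    intro a n hn
    have hpos : 0 < 2^k := by positivity
    set b := n / 2^k with hb
    have hb1 : b ≤ 1 := by
      rw [hb]
      rw [pow_succ] at hn
      exact Nat.lt_succ_iff.mp (Nat.div_lt_iff_lt_mul hpos |>.mpr (by omega))
    obtain ⟨s, hs⟩ := ih (2*a + b) (n % 2^k) (Nat.mod_lt _ hpos)
    refine ⟨1 + 2*b + 4*s, ?_⟩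
    rw [havocLoop]
    rw [dif_pos (by omega)]
    have h1 : (1 + 2*b + 4*s) / 4 = s := by omega
    have h2 : ((1 + 2*b + 4*s) / 2) % 2 = b := by omega
    rw [h1, h2, hs]
    have hmod : b * 2^k + n % 2^k = n := by
      calc b * 2^k + n % 2^k = 2^k * (n / 2^k) + n % 2^k := by rw [hb]; ring
        _ = n := Nat.div_add_mod n (2^k)
    have hm : (b:ℤ) * 2^k + ((n % 2^k : ℕ) : ℤ) = (n:ℤ) := by exact_mod_cast hmod
    push_cast
    push_cast at hm
    linear_combination hm

theorem havoc_surjective : ∀ x : ℤ, ∃ seed : ℕ, (havoc seed).1 = x := by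
  intro x
  rcases le_or_gt 0 x with hx | hx
  · obtain ⟨k, hk⟩ := pow_unbounded_of_one_lt (x.toNat) (by norm_num : (1:ℕ) < 2)
    obtain ⟨s, hs⟩ := havocLoop_key k 0 x.toNat hk
    refine ⟨2*s, ?_⟩
    unfold havoc
    have e1 : (2*s) / 2 = s := by omega
    have e2 : ((2*s : ℕ) : ℤ) % 2 = 0 := by push_cast; omega
    rw [e1, e2]
    simpa [hx, Int.toNat_of_nonneg hx] using hs
  · obtain ⟨k, hk⟩ := pow_unbounded_of_one_lt ((-x).toNat) (by norm_num : (1:ℕ) < 2)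
    have hxz : ((-x).toNat : ℤ) = -x := Int.toNat_of_nonneg (by omega)
    have hlt : -x < ((2^k : ℕ) : ℤ) := by rw [← hxz]; exact_mod_cast hk
    set n := (x + ((2^k : ℕ) : ℤ)).toNat with hndef
    have hn : (n : ℤ) = x + ((2^k : ℕ) : ℤ) := Int.toNat_of_nonneg (by linarith)
    have hnlt : n < 2^k := by
      have : (n : ℤ) < ((2^k : ℕ) : ℤ) := by rw [hn]; linarith
      exact_mod_cast this
    obtain ⟨s, hs⟩ := havocLoop_key k (-1) n hnlt
    refine ⟨2*s+1, ?_⟩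
    unfold havoc
    have e1 : (2*s+1)/2 = s := by omega
    have e2 : ((2*s+1 : ℕ) : ℤ) % 2 = 1 := by push_cast; omega
    rw [e1, e2]
    norm_num at hs ⊢
    rw [hs]
    push_cast at hn ⊢
    linarith
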